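/- For every integer m ≥ 2, E[ReLU(G) h_m(G)] = h_{m-2}(0) g(0) / √(m(m-1)), where G ~ N(0,1), h_j is the j-th normalized probabilist's Hermite polynomial, and g is the standard Gaussian density. -/

import Mathlib

open MeasureTheory ProbabilityTheory

/-- The `m`-th normalized probabilist's Hermite polynomial `h_m(t) = He_m(t)/√(m!)`. -/
noncomputable def hermiteN (m : ℕ) (t : ℝ) : ℝ :=
  (Polynomial.aeval t (Polynomial.hermite m)) / Real.sqrt (Nat.factorial m)

/-- The standard Gaussian density `g(t) = (2π)^{-1/2} e^{-t²/2}`. -/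
noncomputable def stdGaussPDF (t : ℝ) : ℝ :=
  (Real.sqrt (2 * Real.pi))⁻¹ * Real.exp (-t ^ 2 / 2)

open Polynomial Filter in
lemma integrable_pow_gauss (n : ℕ) :
    Integrable (fun x : ℝ => x ^ n * Real.exp (-x ^ 2 / 2)) := by
  have h := integrable_rpow_mul_exp_neg_mul_sq (b := 1/2) (by norm_num)
      (s := (n : ℝ)) (lt_of_lt_of_le (by norm_num) (Nat.cast_nonneg n))
  have e : ∀ x : ℝ, -(1/2 : ℝ) * x ^ 2 = -x ^ 2 / 2 := fun x => by ring
  simp_rw [Real.rpow_natCast, e] at h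
  exact h

open Polynomial Filter in
lemma integrable_poly_gauss (p : Polynomial ℝ) :
    Integrable (fun x : ℝ => Polynomial.eval x p * Real.exp (-x ^ 2 / 2)) := by
  have h : (fun x : ℝ => Polynomial.eval x p * Real.exp (-x ^ 2 / 2)) =
      fun x => ∑ i ∈ Finset.range (p.natDegree + 1),
        p.coeff i * (x ^ i * Real.exp (-x ^ 2 / 2)) := by
    funext x
    rw [Polynomial.eval_eq_sum_range, Finset.sum_mul]
    exact Finset.sum_congr rfl fun i _ => by ring
  rw [h]
  exact integrable_finset_sum _ fun i _ => (integrable_pow_gauss i).const_mul _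

open Polynomial Filter in
lemma tendsto_poly_gauss (p : Polynomial ℝ) :
    Tendsto (fun x : ℝ => Polynomial.eval x p * Real.exp (-x ^ 2 / 2)) atTop (nhds 0) := by
  have hpow : ∀ n : ℕ, Tendsto (fun x : ℝ => x ^ n * Real.exp (-x ^ 2 / 2)) atTop (nhds 0) := by
    intro n
    have hexp : Tendsto (fun x : ℝ => Real.exp (-(1/2) * x)) atTop (nhds 0) := by
      apply Real.tendsto_exp_atBot.comp
      apply Tendsto.const_mul_atTop_of_neg (by norm_num : (-(1/2) : ℝ) < 0) tendsto_id
    have h := (rpow_mul_exp_neg_mul_sq_isLittleO_exp_neg (b := 1/2) (by norm_num)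
        (n : ℝ)).tendsto_zero_of_tendsto hexp
    have e : ∀ x : ℝ, -(1/2 : ℝ) * x ^ 2 = -x ^ 2 / 2 := fun x => by ring
    simp_rw [Real.rpow_natCast, e] at h
    exact h
  have h : (fun x : ℝ => Polynomial.eval x p * Real.exp (-x ^ 2 / 2)) =
      fun x => ∑ i ∈ Finset.range (p.natDegree + 1),
        p.coeff i * (x ^ i * Real.exp (-x ^ 2 / 2)) := by
    funext x
    rw [Polynomial.eval_eq_sum_range, Finset.sum_mul]
    exact Finset.sum_congr rfl fun i _ => by ring
  rw [h]
  have := tendsto_finset_sum (Finset.range (p.natDegree + 1))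
      (fun i _ => ((hpow i).const_mul (p.coeff i)))
  simpa using this

open Polynomial in
lemma hasDerivAt_poly_gauss (p : Polynomial ℝ) (t : ℝ) :
    HasDerivAt (fun x : ℝ => Polynomial.eval x p * Real.exp (-x ^ 2 / 2))
      ((Polynomial.eval t (Polynomial.derivative p) - t * Polynomial.eval t p)
        * Real.exp (-t ^ 2 / 2)) t := by
  have h3 : HasDerivAt (fun x : ℝ => -x ^ 2 / 2) (-t) t := by
    have := ((hasDerivAt_pow 2 t).div_const 2).neg
    simpa [neg_div, Pi.neg_def] using this
  have h2 := h3.exp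
  have h := (p.hasDerivAt t).mul h2
  exact h.congr_deriv (by ring)

/-- The real Hermite polynomial. -/
noncomputable def Hr (n : ℕ) : Polynomial ℝ := (Polynomial.hermite n).map (algebraMap ℤ ℝ)

lemma Hr_eq (n : ℕ) :
    Polynomial.map (algebraMap ℤ ℝ) (Polynomial.hermite n) = Hr n := rfl

open Polynomial in
lemma Hr_succ (n : ℕ) : Hr (n + 1) = X * Hr n - derivative (Hr n) := by
  simp [Hr, hermite_succ, Polynomial.map_sub, Polynomial.map_mul, derivative_map]

open Polynomial in
lemma derivative_Hr (n : ℕ) : derivative (Hr n) = X * Hr n - Hr (n + 1) := by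
  rw [Hr_succ]; ring

open Polynomial in
lemma key_integral (k : ℕ) :
    ∫ t in Set.Ioi (0 : ℝ),
        t * Polynomial.eval t (Hr (k + 2)) * Real.exp (-t ^ 2 / 2)
      = Polynomial.eval 0 (Hr k) := by
  set q : Polynomial ℝ := X * Hr (k + 1) + Hr k with hq
  have hderiv : ∀ t ∈ Set.Ici (0 : ℝ),
      HasDerivAt (fun x : ℝ => -(Polynomial.eval x q * Real.exp (-x ^ 2 / 2)))
        (t * Polynomial.eval t (Hr (k + 2)) * Real.exp (-t ^ 2 / 2)) t := by
    intro t _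
    have h := (hasDerivAt_poly_gauss q t).neg
    have e : Polynomial.eval t (derivative q) - t * Polynomial.eval t q
        = -(t * Polynomial.eval t (Hr (k + 2))) := by
      simp only [hq, derivative_add, derivative_mul, derivative_X, derivative_Hr, eval_add,
        eval_mul, eval_sub, eval_X, eval_one, one_mul]
      ring
    rw [e] at h
    simpa [Pi.neg_def] using h
  have hint : IntegrableOn
      (fun t : ℝ => t * Polynomial.eval t (Hr (k + 2)) * Real.exp (-t ^ 2 / 2))
      (Set.Ioi 0) := by
    have h := (integrable_poly_gauss (X * Hr (k + 2))).integrableOn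
      (s := Set.Ioi (0 : ℝ))
    simpa [eval_mul] using h
  have htend : Filter.Tendsto (fun x : ℝ => -(Polynomial.eval x q * Real.exp (-x ^ 2 / 2)))
      Filter.atTop (nhds 0) := by
    simpa using (tendsto_poly_gauss q).neg
  have h := integral_Ioi_of_hasDerivAt_of_tendsto' hderiv hint htend
  simpa [hq] using h

/-- For the standard Gaussian `G ~ N(0,1)` and any `m ≥ 2`,
`E[ReLU(G) · h_m(G)] = h_{m-2}(0) · g(0) / √(m(m-1))`. -/
theorem relu_hermite_coeff_ge_two (m : ℕ) (hm : 2 ≤ m) :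
    ∫ t, max 0 t * hermiteN m t ∂(gaussianReal 0 1) =
      hermiteN (m - 2) 0 * stdGaussPDF 0 / Real.sqrt (m * (m - 1)) := by
  obtain ⟨k, rfl⟩ : ∃ k, m = k + 2 := ⟨m - 2, by omega⟩
  have hmeas : Measurable fun x => (gaussianPDFReal 0 1 x).toNNReal :=
    (measurable_gaussianPDFReal 0 1).real_toNNReal
  rw [gaussianReal_of_var_ne_zero 0 one_ne_zero,
    show gaussianPDF 0 1 = fun x => ((gaussianPDFReal 0 1 x).toNNReal : ENNReal) by
      funext x; simp [gaussianPDF_def, ENNReal.ofReal],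
    integral_withDensity_eq_integral_smul hmeas]
  have hpdf : ∀ x : ℝ, ((gaussianPDFReal 0 1 x).toNNReal : ℝ)
      = (Real.sqrt (2 * Real.pi))⁻¹ * Real.exp (-x ^ 2 / 2) := by
    intro x
    rw [Real.coe_toNNReal _ (gaussianPDFReal_nonneg 0 1 x)]
    simp [gaussianPDFReal]
  have hfun : (fun x : ℝ => (gaussianPDFReal 0 1 x).toNNReal • (max 0 x * hermiteN (k + 2) x))
      = fun x => ((Real.sqrt (2 * Real.pi))⁻¹ / Real.sqrt (Nat.factorial (k + 2)))
          * (max 0 x * (Polynomial.eval x (Hr (k + 2))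
              * Real.exp (-x ^ 2 / 2))) := by
    funext x
    rw [NNReal.smul_def, smul_eq_mul, hpdf]
    simp only [hermiteN, Polynomial.aeval_def, Polynomial.eval₂_eq_eval_map, Hr_eq]
    ring
  rw [hfun, integral_const_mul,
    ← setIntegral_eq_integral_of_forall_compl_eq_zero (s := Set.Ioi (0 : ℝ))
      (fun x hx => by
        rw [max_eq_left (by simpa using hx)]
        ring)]
  rw [setIntegral_congr_fun measurableSet_Ioi
    (fun x (hx : x ∈ Set.Ioi (0 : ℝ)) => by
      rw [max_eq_right hx.le, ← mul_assoc])]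
  rw [key_integral k]
  -- final algebra
  have h2 : ((k : ℕ) + 2 : ℕ) - 2 = k := by omega
  rw [h2]
  simp only [hermiteN, stdGaussPDF, Polynomial.aeval_def, Polynomial.eval₂_eq_eval_map, Hr_eq]
  have hcast : ((k : ℝ) + 2) * ((k : ℝ) + 2 - 1) = ((k + 2) * (k + 1) : ℕ) := by
    push_cast; ring
  have hfac : ((k + 2).factorial : ℝ) = ((k + 2) * (k + 1) : ℕ) * (k.factorial : ℝ) := by
    rw [Nat.factorial_succ, Nat.factorial_succ]
    push_cast; ring
  have hsqrt : Real.sqrt ((k + 2).factorial) =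
      Real.sqrt (((k + 2) * (k + 1) : ℕ)) * Real.sqrt (k.factorial) := by
    rw [hfac, Real.sqrt_mul (by positivity)]
  push_cast
  rw [show ((k : ℝ) + 2) * ((k : ℝ) + 2 - 1) = (((k + 2) * (k + 1) : ℕ) : ℝ) by push_cast; ring,
    hsqrt]
  have h1 : Real.sqrt (((k + 2) * (k + 1) : ℕ)) ≠ 0 := by
    refine Real.sqrt_ne_zero'.mpr ?_
    positivity
  have h3 : Real.sqrt (k.factorial) ≠ 0 := by
    refine Real.sqrt_ne_zero'.mpr ?_
    exact_mod_cast Nat.factorial_pos k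
  rw [show (-(0:ℝ) ^ 2 / 2) = 0 by norm_num, Real.exp_zero]
  field_simp
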